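/- Let A be a finite-dimensional Hopf algebra with left integral φ_A, right integral ψ_A = φ_A ∘ S, and modular (distinguished group-like) element δ ∈ A characterized by (φ_A ⊗ ι)Δ(a) = φ_A(a)δ. With the adjoint coaction Γ(a) = Σ S(a₁)a₃ ⊗ a₂ of A^cop on A, one has (ι ⊗ φ_A)Γ(a) = φ_A(a) δ and (ι ⊗ ψ_A)Γ(a) = ψ_A(a) δ for all a ∈ A. -/

import Mathlib

set_option maxHeartbeats 1000000
set_option synthInstance.maxHeartbeats 200000

open TensorProduct Coalgebra HopfAlgebra LinearMap

section Toolkit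

variable (K A : Type*) [Field K] [Ring A] [HopfAlgebra K A] [FiniteDimensional K A]

noncomputable def bb : Module.Basis (Fin (Module.finrank K A)) K A := Module.finBasis K A

noncomputable def DD (i : Fin (Module.finrank K A)) : A →ₗ[K] A :=
  (TensorProduct.rid K A).toLinearMap ∘ₗ LinearMap.lTensor A ((bb K A).coord i) ∘ₗ
    Coalgebra.comul

variable {K A}

lemma expand (u : A ⊗[K] A) :
    u = ∑ i, ((TensorProduct.rid K A) (LinearMap.lTensor A ((bb K A).coord i) u)) ⊗ₜ[K]
      bb K A i := by
  induction u using TensorProduct.induction_on with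
  | zero => simp
  | tmul x y =>
      simp only [LinearMap.lTensor_tmul, TensorProduct.rid_tmul, Module.Basis.coord_apply]
      calc x ⊗ₜ[K] y = x ⊗ₜ[K] (∑ i, (bb K A).repr y i • bb K A i) := by
            rw [Module.Basis.sum_repr]
        _ = ∑ i, ((bb K A).repr y i • x) ⊗ₜ[K] bb K A i := by
            rw [TensorProduct.tmul_sum]
            exact Finset.sum_congr rfl fun i _ => (TensorProduct.smul_tmul _ _ _).symm
  | add u v hu hv =>
      simp only [map_add, TensorProduct.add_tmul]
      rw [Finset.sum_add_distrib]
      exact congrArg₂ (· + ·) hu hv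

lemma repDD (x : A) :
    Coalgebra.comul (R := K) x = ∑ i, DD K A i x ⊗ₜ[K] bb K A i := by
  simpa [DD] using expand (Coalgebra.comul (R := K) x)


variable (φ : A →ₗ[K] K) (δ : A)

/-- hleft in coordinates -/
lemma T1 (hleft : ∀ a : A,
      (TensorProduct.rid K A) ((LinearMap.lTensor A φ) (Coalgebra.comul (R := K) a)) = φ a • 1)
    (x : A) : ∑ i, φ (bb K A i) • DD K A i x = φ x • (1 : A) := by
  have h := hleft x
  rw [repDD x] at h
  simpa [map_sum] using h

/-- hmod in coordinates -/
lemma T2 (hmod : ∀ a : A,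
      (TensorProduct.lid K A) ((LinearMap.rTensor A φ) (Coalgebra.comul (R := K) a)) = φ a • δ)
    (x : A) : ∑ i, φ (DD K A i x) • bb K A i = φ x • δ := by
  have h := hmod x
  rw [repDD x] at h
  simpa [map_sum] using h

lemma T3 (x : A) :
    ∑ i, antipode (R := K) (DD K A i x) * bb K A i = counit (R := K) x • (1 : A) := by
  have h := mul_antipode_rTensor_comul_apply (R := K) x
  rw [repDD x] at h
  simpa [map_sum, Algebra.algebraMap_eq_smul_one] using h

lemma T4 (x : A) :
    ∑ i, DD K A i x * antipode (R := K) (bb K A i) = counit (R := K) x • (1 : A) := by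
  have h := mul_antipode_lTensor_comul_apply (R := K) x
  rw [repDD x] at h
  simpa [map_sum, Algebra.algebraMap_eq_smul_one] using h

lemma T5a (x : A) : ∑ i, counit (R := K) (bb K A i) • DD K A i x = x := by
  have h := Coalgebra.lTensor_counit_comul (R := K) x
  rw [repDD x] at h
  have := congrArg (TensorProduct.rid K A) h
  simpa [map_sum] using this

lemma T5b (x : A) : ∑ i, counit (R := K) (DD K A i x) • bb K A i = x := by
  have h := Coalgebra.rTensor_counit_comul (R := K) x
  rw [repDD x] at h
  have := congrArg (TensorProduct.lid K A) h
  simpa [map_sum] using this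

lemma comulMul (x y : A) :
    Coalgebra.comul (R := K) (x * y) =
      ∑ i, ∑ j, (DD K A i x * DD K A j y) ⊗ₜ[K] (bb K A i * bb K A j) := by
  rw [Bialgebra.comul_mul, repDD x, repDD y, Finset.sum_mul_sum]
  simp [Algebra.TensorProduct.tmul_mul_tmul]


/-- coassociativity swap for double coordinates -/
lemma swapDD (L : A ⊗[K] (A ⊗[K] A) →ₗ[K] A) (x : A) :
    ∑ i, ∑ k, L (DD K A k (DD K A i x) ⊗ₜ[K] (bb K A k ⊗ₜ[K] bb K A i)) =
    ∑ i, ∑ k, L (DD K A i x ⊗ₜ[K] (DD K A k (bb K A i) ⊗ₜ[K] bb K A k)) := by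
  have hr : (TensorProduct.assoc K A A A)
      ((LinearMap.rTensor A (Coalgebra.comul (R := K))) (Coalgebra.comul (R := K) x)) =
      (LinearMap.lTensor A (Coalgebra.comul (R := K))) (Coalgebra.comul (R := K) x) :=
    Coalgebra.coassoc_apply x
  have h1 : (LinearMap.rTensor A (Coalgebra.comul (R := K))) (Coalgebra.comul (R := K) x) =
      ∑ i, ∑ k, (DD K A k (DD K A i x) ⊗ₜ[K] bb K A k) ⊗ₜ[K] bb K A i := by
    rw [repDD x, map_sum]
    exact Finset.sum_congr rfl fun i _ => by
      rw [LinearMap.rTensor_tmul, repDD (DD K A i x), TensorProduct.sum_tmul]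
  have h2 : (LinearMap.lTensor A (Coalgebra.comul (R := K))) (Coalgebra.comul (R := K) x) =
      ∑ i, ∑ k, DD K A i x ⊗ₜ[K] (DD K A k (bb K A i) ⊗ₜ[K] bb K A k) := by
    rw [repDD x, map_sum]
    exact Finset.sum_congr rfl fun i _ => by
      rw [LinearMap.lTensor_tmul, repDD (bb K A i), TensorProduct.tmul_sum]
  calc ∑ i, ∑ k, L (DD K A k (DD K A i x) ⊗ₜ[K] (bb K A k ⊗ₜ[K] bb K A i))
      = L ((TensorProduct.assoc K A A A)
          ((LinearMap.rTensor A (Coalgebra.comul (R := K))) (Coalgebra.comul (R := K) x))) := by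
        rw [h1, map_sum, map_sum]
        simp only [map_sum, TensorProduct.assoc_tmul]
    _ = L ((LinearMap.lTensor A (Coalgebra.comul (R := K))) (Coalgebra.comul (R := K) x)) := by
        rw [hr]
    _ = ∑ i, ∑ k, L (DD K A i x ⊗ₜ[K] (DD K A k (bb K A i) ⊗ₜ[K] bb K A k)) := by
        rw [h2, map_sum]
        simp only [map_sum]



variable (K A)

noncomputable def LA (φ : A →ₗ[K] K) (b : A) : A ⊗[K] (A ⊗[K] A) →ₗ[K] A :=
  ∑ j, (LinearMap.mul' K A) ∘ₗ (LinearMap.rTensor A (antipode (R := K))) ∘ₗ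
    (LinearMap.lTensor A ((LinearMap.mulRight K (DD K A j b)) ∘ₗ
      (TensorProduct.rid K A).toLinearMap ∘ₗ
      LinearMap.lTensor A (φ ∘ₗ LinearMap.mulRight K (bb K A j))))

variable {K A}

lemma LA_apply (b : A) (u v w : A) :
    LA K A φ b (u ⊗ₜ[K] (v ⊗ₜ[K] w)) =
      ∑ j, φ (w * bb K A j) • (antipode (R := K) u * (v * DD K A j b)) := by
  simp [LA, LinearMap.sum_apply, mul_smul_comm]


lemma lemA
    (hleft : ∀ a : A,
      (TensorProduct.rid K A) ((LinearMap.lTensor A φ) (Coalgebra.comul (R := K) a)) = φ a • 1)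
    (x b : A) :
    ∑ i, φ (bb K A i * b) • antipode (R := K) (DD K A i x) =
      ∑ j, φ (x * bb K A j) • DD K A j b := by
  have step0 : ∀ c : A, (φ (c * b) • (1 : A)) =
      ∑ k, ∑ j, φ (bb K A k * bb K A j) • (DD K A k c * DD K A j b) := by
    intro c
    have h := hleft (c * b)
    rw [comulMul c b, map_sum] at h
    simp only [map_sum, LinearMap.lTensor_tmul, TensorProduct.rid_tmul] at h
    exact h.symm
  calc ∑ i, φ (bb K A i * b) • antipode (R := K) (DD K A i x)
      = ∑ i, antipode (R := K) (DD K A i x) * (φ (bb K A i * b) • (1 : A)) := by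
        simp [mul_smul_comm]
    _ = ∑ i, ∑ k, ∑ j, φ (bb K A k * bb K A j) •
          (antipode (R := K) (DD K A i x) * (DD K A k (bb K A i) * DD K A j b)) := by
        refine Finset.sum_congr rfl fun i _ => ?_
        rw [step0 (bb K A i), Finset.mul_sum]
        refine Finset.sum_congr rfl fun k _ => ?_
        rw [Finset.mul_sum]
        exact Finset.sum_congr rfl fun j _ => (mul_smul_comm _ _ _)
    _ = ∑ i, ∑ k, LA K A φ b (DD K A i x ⊗ₜ[K] (DD K A k (bb K A i) ⊗ₜ[K] bb K A k)) := by
        refine Finset.sum_congr rfl fun i _ => Finset.sum_congr rfl fun k _ => ?_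
        rw [LA_apply]
    _ = ∑ i, ∑ k, LA K A φ b (DD K A k (DD K A i x) ⊗ₜ[K] (bb K A k ⊗ₜ[K] bb K A i)) :=
        (swapDD (LA K A φ b) x).symm
    _ = ∑ i, ∑ k, ∑ j, φ (bb K A i * bb K A j) •
          ((antipode (R := K) (DD K A k (DD K A i x)) * bb K A k) * DD K A j b) := by
        refine Finset.sum_congr rfl fun i _ => Finset.sum_congr rfl fun k _ => ?_
        rw [LA_apply]
        exact Finset.sum_congr rfl fun j _ => by rw [mul_assoc]
    _ = ∑ i, ∑ j, (counit (R := K) (DD K A i x) * φ (bb K A i * bb K A j)) • DD K A j b := by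
        refine Finset.sum_congr rfl fun i _ => ?_
        rw [Finset.sum_comm]
        refine Finset.sum_congr rfl fun j _ => ?_
        rw [← Finset.smul_sum, ← Finset.sum_mul, T3, smul_mul_assoc, one_mul, smul_smul,
          mul_comm]
    _ = ∑ j, φ (x * bb K A j) • DD K A j b := by
        rw [Finset.sum_comm]
        refine Finset.sum_congr rfl fun j _ => ?_
        rw [← Finset.sum_smul]
        congr 1
        calc ∑ i, counit (R := K) (DD K A i x) * φ (bb K A i * bb K A j)
            = φ ((∑ i, counit (R := K) (DD K A i x) • bb K A i) * bb K A j) := by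
              rw [Finset.sum_mul, map_sum]
              exact Finset.sum_congr rfl fun i _ => by
                rw [smul_mul_assoc, map_smul, smul_eq_mul]
          _ = φ (x * bb K A j) := by rw [T5b]


variable (K A)

noncomputable def LB (φ : A →ₗ[K] K) (x : A) : A ⊗[K] (A ⊗[K] A) →ₗ[K] A :=
  ∑ i, (LinearMap.mulLeft K (bb K A i)) ∘ₗ (TensorProduct.lid K A).toLinearMap ∘ₗ
    (LinearMap.rTensor A (φ ∘ₗ LinearMap.mulLeft K (DD K A i x))) ∘ₗ
    (LinearMap.lTensor A ((LinearMap.mul' K A) ∘ₗ (LinearMap.lTensor A (antipode (R := K)))))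

variable {K A}

lemma LB_apply (x : A) (u v w : A) :
    LB K A φ x (u ⊗ₜ[K] (v ⊗ₜ[K] w)) =
      ∑ i, φ (DD K A i x * u) • (bb K A i * (v * antipode (R := K) w)) := by
  simp [LB, LinearMap.sum_apply, mul_smul_comm]

lemma T2m
    (hmod : ∀ a : A,
      (TensorProduct.lid K A) ((LinearMap.rTensor A φ) (Coalgebra.comul (R := K) a)) = φ a • δ)
    (x c : A) :
    ∑ i, ∑ k, φ (DD K A i x * DD K A k c) • (bb K A i * bb K A k) = φ (x * c) • δ := by
  have h := hmod (x * c)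
  rw [comulMul x c, map_sum] at h
  simp only [map_sum, LinearMap.rTensor_tmul, TensorProduct.lid_tmul] at h
  exact h

lemma lemB
    (hmod : ∀ a : A,
      (TensorProduct.lid K A) ((LinearMap.rTensor A φ) (Coalgebra.comul (R := K) a)) = φ a • δ)
    (x b : A) :
    ∑ i, φ (DD K A i x * b) • bb K A i =
      δ * ∑ j, φ (x * DD K A j b) • antipode (R := K) (bb K A j) := by
  calc ∑ i, φ (DD K A i x * b) • bb K A i
      = ∑ j, ∑ k, LB K A φ x (DD K A j b ⊗ₜ[K] (DD K A k (bb K A j) ⊗ₜ[K] bb K A k)) := by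
        symm
        calc ∑ j, ∑ k, LB K A φ x (DD K A j b ⊗ₜ[K] (DD K A k (bb K A j) ⊗ₜ[K] bb K A k))
            = ∑ j, ∑ i, (φ (DD K A i x * DD K A j b) * counit (R := K) (bb K A j)) •
                bb K A i := by
              refine Finset.sum_congr rfl fun j _ => ?_
              calc ∑ k, LB K A φ x (DD K A j b ⊗ₜ[K] (DD K A k (bb K A j) ⊗ₜ[K] bb K A k))
                  = ∑ k, ∑ i, φ (DD K A i x * DD K A j b) •
                      (bb K A i * (DD K A k (bb K A j) * antipode (R := K) (bb K A k))) := by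
                    exact Finset.sum_congr rfl fun k _ => LB_apply φ x _ _ _
                _ = ∑ i, (φ (DD K A i x * DD K A j b) * counit (R := K) (bb K A j)) •
                      bb K A i := by
                    rw [Finset.sum_comm]
                    refine Finset.sum_congr rfl fun i _ => ?_
                    rw [← Finset.smul_sum, ← Finset.mul_sum, T4, mul_smul_comm, mul_one,
                      smul_smul]
            _ = ∑ i, φ (DD K A i x * b) • bb K A i := by
              rw [Finset.sum_comm]
              refine Finset.sum_congr rfl fun i _ => ?_
              rw [← Finset.sum_smul]
              congr 1
              refine Eq.symm ?_
              calc φ (DD K A i x * b)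
                  = φ (DD K A i x * ∑ j, counit (R := K) (bb K A j) • DD K A j b) := by
                    rw [T5a]
                _ = ∑ j, φ (DD K A i x * DD K A j b) * counit (R := K) (bb K A j) := by
                    rw [Finset.mul_sum, map_sum]
                    exact Finset.sum_congr rfl fun j _ => by
                      rw [mul_smul_comm, map_smul, smul_eq_mul, mul_comm]
    _ = ∑ j, ∑ k, LB K A φ x (DD K A k (DD K A j b) ⊗ₜ[K] (bb K A k ⊗ₜ[K] bb K A j)) :=
        (swapDD (LB K A φ x) b).symm
    _ = δ * ∑ j, φ (x * DD K A j b) • antipode (R := K) (bb K A j) := by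
        rw [Finset.mul_sum]
        refine Finset.sum_congr rfl fun j _ => ?_
        calc ∑ k, LB K A φ x (DD K A k (DD K A j b) ⊗ₜ[K] (bb K A k ⊗ₜ[K] bb K A j))
            = ∑ k, ∑ i, φ (DD K A i x * DD K A k (DD K A j b)) •
                ((bb K A i * bb K A k) * antipode (R := K) (bb K A j)) := by
              refine Finset.sum_congr rfl fun k _ => ?_
              rw [LB_apply]
              exact Finset.sum_congr rfl fun i _ => by rw [mul_assoc]
          _ = (∑ i, ∑ k, φ (DD K A i x * DD K A k (DD K A j b)) •
                (bb K A i * bb K A k)) * antipode (R := K) (bb K A j) := by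
              rw [Finset.sum_comm, Finset.sum_mul]
              exact Finset.sum_congr rfl fun i _ => by
                rw [Finset.sum_mul]
                exact Finset.sum_congr rfl fun k _ => (smul_mul_assoc _ _ _).symm
          _ = (φ (x * DD K A j b) • δ) * antipode (R := K) (bb K A j) := by
              rw [T2m φ δ hmod]
          _ = φ (x * DD K A j b) • (δ * antipode (R := K) (bb K A j)) := smul_mul_assoc _ _ _
          _ = δ * (φ (x * DD K A j b) • antipode (R := K) (bb K A j)) :=
              (mul_smul_comm _ _ _).symm


lemma coeff_eq_zero {c : Fin (Module.finrank K A) → K} (h : ∑ i, c i • bb K A i = 0) :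
    ∀ i, c i = 0 :=
  Fintype.linearIndependent_iff.mp (bb K A).linearIndependent c h

lemma step2
    (hmod : ∀ a : A,
      (TensorProduct.lid K A) ((LinearMap.rTensor A φ) (Coalgebra.comul (R := K) a)) = φ a • δ)
    {x : A} (hx : ∀ c, φ (x * c) = 0) : ∀ i c, φ (DD K A i x * c) = 0 := by
  intro i c
  have h := lemB φ δ hmod x c
  simp only [hx, zero_smul, Finset.sum_const_zero, mul_zero] at h
  exact coeff_eq_zero h i

lemma step3
    (hleft : ∀ a : A,
      (TensorProduct.rid K A) ((LinearMap.lTensor A φ) (Coalgebra.comul (R := K) a)) = φ a • 1)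
    {x : A} (hx : ∀ c, φ (x * c) = 0) (b : A) :
    ∑ i, φ (bb K A i * b) • antipode (R := K) (DD K A i x) = 0 := by
  rw [lemA φ hleft x b]
  simp [hx]

variable (K A)

noncomputable def LC (φ : A →ₗ[K] K) (t : A) : A ⊗[K] (A ⊗[K] A) →ₗ[K] A :=
  (antipode (R := K)) ∘ₗ (TensorProduct.rid K A).toLinearMap ∘ₗ
    LinearMap.lTensor A (φ ∘ₗ LinearMap.mul' K A ∘ₗ
      LinearMap.lTensor A (LinearMap.mulRight K t ∘ₗ antipode (R := K)))

variable {K A}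

lemma LC_apply (t u v w : A) :
    LC K A φ t (u ⊗ₜ[K] (v ⊗ₜ[K] w)) =
      φ (v * (antipode (R := K) w * t)) • antipode (R := K) u := by
  simp [LC]

lemma step4_id (t : A) (ht : φ t = 1) (y : A) :
    antipode (R := K) y =
      ∑ i, ∑ k, φ (bb K A k * (antipode (R := K) (bb K A i) * t)) •
        antipode (R := K) (DD K A k (DD K A i y)) := by
  have hs := swapDD (LC K A φ t) y
  calc antipode (R := K) y
      = ∑ i, counit (R := K) (bb K A i) • antipode (R := K) (DD K A i y) := by
        conv_lhs => rw [← T5a (K := K) y]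
        rw [map_sum]
        exact Finset.sum_congr rfl fun i _ => map_smul _ _ _
    _ = ∑ i, ∑ k, LC K A φ t (DD K A i y ⊗ₜ[K] (DD K A k (bb K A i) ⊗ₜ[K] bb K A k)) := by
        refine Finset.sum_congr rfl fun i _ => ?_
        have : ∑ k, LC K A φ t (DD K A i y ⊗ₜ[K] (DD K A k (bb K A i) ⊗ₜ[K] bb K A k)) =
            ∑ k, φ ((DD K A k (bb K A i) * antipode (R := K) (bb K A k)) * t) •
              antipode (R := K) (DD K A i y) := by
          refine Finset.sum_congr rfl fun k _ => ?_
          rw [LC_apply, mul_assoc]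
        rw [this, ← Finset.sum_smul]
        congr 1
        refine Eq.symm ?_
        calc ∑ k, φ ((DD K A k (bb K A i) * antipode (R := K) (bb K A k)) * t)
            = φ ((∑ k, DD K A k (bb K A i) * antipode (R := K) (bb K A k)) * t) := by
              rw [Finset.sum_mul, map_sum]
          _ = counit (R := K) (bb K A i) := by
              rw [T4, smul_mul_assoc, one_mul, map_smul, ht, smul_eq_mul, mul_one]
    _ = ∑ i, ∑ k, LC K A φ t (DD K A k (DD K A i y) ⊗ₜ[K] (bb K A k ⊗ₜ[K] bb K A i)) := hs.symm
    _ = ∑ i, ∑ k, φ (bb K A k * (antipode (R := K) (bb K A i) * t)) •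
          antipode (R := K) (DD K A k (DD K A i y)) := by
        exact Finset.sum_congr rfl fun i _ => Finset.sum_congr rfl fun k _ => LC_apply φ t _ _ _

lemma step4
    (hleft : ∀ a : A,
      (TensorProduct.rid K A) ((LinearMap.lTensor A φ) (Coalgebra.comul (R := K) a)) = φ a • 1)
    (hmod : ∀ a : A,
      (TensorProduct.lid K A) ((LinearMap.rTensor A φ) (Coalgebra.comul (R := K) a)) = φ a • δ)
    (t : A) (ht : φ t = 1)
    {x : A} (hx : ∀ c, φ (x * c) = 0) : antipode (R := K) x = 0 := by
  rw [step4_id φ t ht x]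
  refine Finset.sum_eq_zero fun i _ => ?_
  exact step3 φ hleft (step2 φ δ hmod hx i) (antipode (R := K) (bb K A i) * t)

lemma step5_id (t : A) (ht : φ t = 1) (y : A) :
    y = ∑ i, ∑ k, φ (t * (antipode (R := K) (DD K A k (DD K A i y)) * bb K A k)) • bb K A i := by
  symm
  calc ∑ i, ∑ k, φ (t * (antipode (R := K) (DD K A k (DD K A i y)) * bb K A k)) • bb K A i
      = ∑ i, counit (R := K) (DD K A i y) • bb K A i := by
        refine Finset.sum_congr rfl fun i _ => ?_
        rw [← Finset.sum_smul]
        congr 1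
        calc ∑ k, φ (t * (antipode (R := K) (DD K A k (DD K A i y)) * bb K A k))
            = φ (t * ∑ k, antipode (R := K) (DD K A k (DD K A i y)) * bb K A k) := by
              rw [Finset.mul_sum, map_sum]
          _ = counit (R := K) (DD K A i y) := by
              rw [T3, mul_smul_comm, mul_one, map_smul, ht, smul_eq_mul, mul_one]
    _ = y := T5b y

lemma step5
    (hleft : ∀ a : A,
      (TensorProduct.rid K A) ((LinearMap.lTensor A φ) (Coalgebra.comul (R := K) a)) = φ a • 1)
    (hmod : ∀ a : A,
      (TensorProduct.lid K A) ((LinearMap.rTensor A φ) (Coalgebra.comul (R := K) a)) = φ a • δ)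
    (t : A) (ht : φ t = 1)
    {x : A} (hx : ∀ c, φ (x * c) = 0) : x = 0 := by
  rw [step5_id φ t ht x]
  refine Finset.sum_eq_zero fun i _ => Finset.sum_eq_zero fun k _ => ?_
  rw [step4 φ δ hleft hmod t ht (step2 φ δ hmod (step2 φ δ hmod hx i) k), zero_mul, mul_zero,
    map_zero, zero_smul]


lemma antipode_one' : antipode (R := K) (1 : A) = 1 := by
  have h := mul_antipode_rTensor_comul_apply (R := K) (1 : A)
  rw [Bialgebra.comul_one, Algebra.TensorProduct.one_def] at h
  simpa using h

lemma step6
    (hleft : ∀ a : A,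
      (TensorProduct.rid K A) ((LinearMap.lTensor A φ) (Coalgebra.comul (R := K) a)) = φ a • 1)
    (hmod : ∀ a : A,
      (TensorProduct.lid K A) ((LinearMap.rTensor A φ) (Coalgebra.comul (R := K) a)) = φ a • δ)
    (a b : A) :
    φ ((∑ i, φ (antipode (R := K) (DD K A i a)) • bb K A i) * b) = φ (a * δ) * φ b := by
  calc φ ((∑ i, φ (antipode (R := K) (DD K A i a)) • bb K A i) * b)
      = φ (∑ i, φ (bb K A i * b) • antipode (R := K) (DD K A i a)) := by
        rw [Finset.sum_mul, map_sum, map_sum]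
        refine Finset.sum_congr rfl fun i _ => ?_
        rw [smul_mul_assoc, map_smul, map_smul, smul_eq_mul, smul_eq_mul, mul_comm]
    _ = φ (∑ j, φ (a * bb K A j) • DD K A j b) := by rw [lemA φ hleft a b]
    _ = φ (a * (φ b • δ)) := by
        rw [← T2 φ δ hmod b, Finset.mul_sum, map_sum, map_sum]
        refine Finset.sum_congr rfl fun j _ => ?_
        rw [map_smul, mul_smul_comm, map_smul, smul_eq_mul, smul_eq_mul, mul_comm]
    _ = φ (a * δ) * φ b := by
        rw [mul_smul_comm, map_smul, smul_eq_mul, mul_comm]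

lemma step7
    (hleft : ∀ a : A,
      (TensorProduct.rid K A) ((LinearMap.lTensor A φ) (Coalgebra.comul (R := K) a)) = φ a • 1)
    (hmod : ∀ a : A,
      (TensorProduct.lid K A) ((LinearMap.rTensor A φ) (Coalgebra.comul (R := K) a)) = φ a • δ)
    (t : A) (ht : φ t = 1) (a : A) :
    ∑ i, φ (antipode (R := K) (DD K A i a)) • bb K A i = φ (a * δ) • (1 : A) := by
  have hx : ∀ c, φ (((∑ i, φ (antipode (R := K) (DD K A i a)) • bb K A i) -
      φ (a * δ) • (1 : A)) * c) = 0 := by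
    intro c
    rw [sub_mul, map_sub, step6 φ δ hleft hmod a c, smul_mul_assoc, one_mul, map_smul,
      smul_eq_mul, sub_self]
  have := step5 φ δ hleft hmod t ht hx
  exact sub_eq_zero.mp this

lemma step8
    (hleft : ∀ a : A,
      (TensorProduct.rid K A) ((LinearMap.lTensor A φ) (Coalgebra.comul (R := K) a)) = φ a • 1)
    (hmod : ∀ a : A,
      (TensorProduct.lid K A) ((LinearMap.rTensor A φ) (Coalgebra.comul (R := K) a)) = φ a • δ)
    (t : A) (ht : φ t = 1) (a : A) :
    φ (antipode (R := K) a) = φ (a * δ) := by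
  have h := congrArg (counit (R := K)) (step7 φ δ hleft hmod t ht a)
  rw [map_smul, Bialgebra.counit_one, smul_eq_mul, mul_one, map_sum] at h
  calc φ (antipode (R := K) a)
      = φ (antipode (R := K) (∑ i, counit (R := K) (bb K A i) • DD K A i a)) := by rw [T5a]
    _ = ∑ i, φ (antipode (R := K) (DD K A i a)) • counit (R := K) (bb K A i) := by
        rw [map_sum, map_sum]
        refine Finset.sum_congr rfl fun i _ => ?_
        rw [map_smul, map_smul, smul_eq_mul, smul_eq_mul, mul_comm]
    _ = φ (a * δ) := by
        rw [← h]
        exact Finset.sum_congr rfl fun i _ => by rw [map_smul]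

end Toolkit

/-- Let `A` be a finite-dimensional Hopf algebra over a field `K`,
`φ_A` a nonzero left integral, `ψ_A = φ_A ∘ S` the corresponding right integral, and
`δ` the modular (distinguished group-like) element, characterized by
`(φ_A ⊗ ι)Δ(a) = φ_A(a) δ`.  For the adjoint coaction `Γ(a) = Σ S(a₁) a₃ ⊗ a₂`
(of `A^cop` on `A`) one has `(ι ⊗ φ_A)Γ(a) = φ_A(a) δ` and
`(ι ⊗ ψ_A)Γ(a) = ψ_A(a) δ`, i.e. `Σ φ_A(a₂) S(a₁) a₃ = φ_A(a) δ` and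
`Σ ψ_A(a₂) S(a₁) a₃ = ψ_A(a) δ`. -/
theorem stmt_13 (K A : Type*) [Field K] [Ring A] [HopfAlgebra K A]
    [FiniteDimensional K A]
    (φ : A →ₗ[K] K) (hφ : φ ≠ 0)
    (hleft : ∀ a : A,
      (TensorProduct.rid K A) ((LinearMap.lTensor A φ) (Coalgebra.comul (R := K) a)) = φ a • 1)
    (δ : A)
    (hδ_grouplike : Coalgebra.comul (R := K) δ = δ ⊗ₜ[K] δ)
    (hδ_counit : Coalgebra.counit (R := K) δ = 1)
    (hmod : ∀ a : A,
      (TensorProduct.lid K A) ((LinearMap.rTensor A φ) (Coalgebra.comul (R := K) a)) = φ a • δ) :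
    ∀ (a : A) (n : ℕ) (x y z : Fin n → A),
      (LinearMap.lTensor A (Coalgebra.comul (R := K))) (Coalgebra.comul (R := K) a) =
        ∑ i, x i ⊗ₜ[K] (y i ⊗ₜ[K] z i) →
      (∑ i, φ (y i) • (HopfAlgebra.antipode (R := K) (x i) * z i) = φ a • δ) ∧
      (∑ i, φ (HopfAlgebra.antipode (R := K) (y i)) •
          (HopfAlgebra.antipode (R := K) (x i) * z i) =
        φ (HopfAlgebra.antipode (R := K) a) • δ) := by
  intro a n x y z hrep
  obtain ⟨s, hs⟩ := DFunLike.ne_iff.mp hφ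
  have hs' : φ s ≠ 0 := by simpa using hs
  have ht : φ ((φ s)⁻¹ • s) = 1 := by
    rw [map_smul, smul_eq_mul, inv_mul_cancel₀ hs']
  set t : A := (φ s)⁻¹ • s with htd
  have hLrep : (LinearMap.lTensor A (Coalgebra.comul (R := K))) (Coalgebra.comul (R := K) a) =
      ∑ i, DD K A i a ⊗ₜ[K] Coalgebra.comul (R := K) (bb K A i) := by
    rw [repDD a, map_sum]
    exact Finset.sum_congr rfl fun i _ => LinearMap.lTensor_tmul _ _ _ _
  constructor
  · set L1 : A ⊗[K] (A ⊗[K] A) →ₗ[K] A :=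
      (LinearMap.mul' K A) ∘ₗ (LinearMap.rTensor A (HopfAlgebra.antipode (R := K))) ∘ₗ
        (LinearMap.lTensor A
          ((TensorProduct.lid K A).toLinearMap ∘ₗ LinearMap.rTensor A φ)) with hL1
    have h1 := congrArg L1 hrep
    rw [hLrep] at h1
    have hR : L1 (∑ i, x i ⊗ₜ[K] (y i ⊗ₜ[K] z i)) =
        ∑ i, φ (y i) • (HopfAlgebra.antipode (R := K) (x i) * z i) := by
      rw [map_sum]
      refine Finset.sum_congr rfl fun i _ => ?_
      simp [hL1, mul_smul_comm]
    have hL : L1 (∑ i, DD K A i a ⊗ₜ[K] Coalgebra.comul (R := K) (bb K A i)) = φ a • δ := by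
      rw [map_sum]
      calc ∑ i, L1 (DD K A i a ⊗ₜ[K] Coalgebra.comul (R := K) (bb K A i))
          = ∑ i, φ (bb K A i) • (HopfAlgebra.antipode (R := K) (DD K A i a) * δ) := by
            refine Finset.sum_congr rfl fun i _ => ?_
            simp only [hL1, LinearMap.coe_comp, Function.comp_apply, LinearMap.lTensor_tmul,
              LinearMap.coe_comp, LinearEquiv.coe_coe]
            rw [hmod (bb K A i)]
            simp [mul_smul_comm]
        _ = (∑ i, φ (bb K A i) • HopfAlgebra.antipode (R := K) (DD K A i a)) * δ := by
            rw [Finset.sum_mul]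
            exact Finset.sum_congr rfl fun i _ => (smul_mul_assoc _ _ _).symm
        _ = (HopfAlgebra.antipode (R := K) (∑ i, φ (bb K A i) • DD K A i a)) * δ := by
            rw [map_sum]
            exact congrArg (· * δ) (Finset.sum_congr rfl fun i _ => (map_smul _ _ _).symm)
        _ = φ a • δ := by
            rw [T1 φ hleft a, map_smul, antipode_one', smul_mul_assoc, one_mul]
    rw [← hR, ← hL, h1]
  · set L2 : A ⊗[K] (A ⊗[K] A) →ₗ[K] A :=
      (LinearMap.mul' K A) ∘ₗ (LinearMap.rTensor A (HopfAlgebra.antipode (R := K))) ∘ₗ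
        (LinearMap.lTensor A
          ((TensorProduct.lid K A).toLinearMap ∘ₗ
            LinearMap.rTensor A (φ ∘ₗ HopfAlgebra.antipode (R := K)))) with hL2
    have h1 := congrArg L2 hrep
    rw [hLrep] at h1
    have hR : L2 (∑ i, x i ⊗ₜ[K] (y i ⊗ₜ[K] z i)) =
        ∑ i, φ (HopfAlgebra.antipode (R := K) (y i)) •
          (HopfAlgebra.antipode (R := K) (x i) * z i) := by
      rw [map_sum]
      refine Finset.sum_congr rfl fun i _ => ?_
      simp [hL2, mul_smul_comm]
    have hg2 : ∀ c : A,
        (TensorProduct.lid K A)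
          ((LinearMap.rTensor A (φ ∘ₗ HopfAlgebra.antipode (R := K)))
            (Coalgebra.comul (R := K) c)) = φ (c * δ) • (1 : A) := by
      intro c
      rw [repDD c]
      simp only [map_sum, LinearMap.rTensor_tmul, TensorProduct.lid_tmul, LinearMap.coe_comp,
        Function.comp_apply]
      exact step7 φ δ hleft hmod t ht c
    have hL : L2 (∑ i, DD K A i a ⊗ₜ[K] Coalgebra.comul (R := K) (bb K A i)) =
        φ (HopfAlgebra.antipode (R := K) a) • δ := by
      rw [map_sum]
      calc ∑ i, L2 (DD K A i a ⊗ₜ[K] Coalgebra.comul (R := K) (bb K A i))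
          = ∑ i, φ (bb K A i * δ) • HopfAlgebra.antipode (R := K) (DD K A i a) := by
            refine Finset.sum_congr rfl fun i _ => ?_
            simp only [hL2, LinearMap.coe_comp, Function.comp_apply, LinearMap.lTensor_tmul,
              LinearEquiv.coe_coe]
            rw [hg2 (bb K A i)]
            simp [mul_smul_comm]
        _ = ∑ j, φ (a * bb K A j) • DD K A j δ := lemA φ hleft a δ
        _ = φ (a * δ) • δ := by
            have hδ2 : ∑ j, DD K A j δ ⊗ₜ[K] bb K A j = δ ⊗ₜ[K] δ := by
              rw [← repDD δ, hδ_grouplike]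
            have := congrArg
              ((TensorProduct.rid K A).toLinearMap ∘ₗ
                LinearMap.lTensor A (φ ∘ₗ LinearMap.mulLeft K a)) hδ2
            simpa [map_sum] using this
        _ = φ (HopfAlgebra.antipode (R := K) a) • δ := by
            rw [step8 φ δ hleft hmod t ht a]
    rw [← hR, ← hL, h1]
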